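/- Let $G$ be a $p$-saturated group with $p$-valuation $\omega$, and let $\varphi$ be an automorphism of $G$ with $\deg_\omega(\varphi) := \inf_{g \in G}(\omega(\varphi(g)g^{-1}) - \omega(g)) > 1/(p-1)$, such that $\varphi(g)g^{-1}$ lies in the centre $Z$ of $G$ for all $g$. Then the map $z(\varphi) : G \to G$ defined by $z(\varphi)(g) = \lim_{r \to \infty}(\varphi^{p^r}(g)g^{-1})^{p^{-r}}$ is a well-defined group homomorphism from $G$ to $Z$. -/

import Mathlib

set_option linter.unusedSectionVars false
set_option maxHeartbeats 1000000

section Helpers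

variable {G : Type*} [Group G] {p : ℕ} {ω : G → WithTop ℝ}

lemma omega_one (htop : ∀ x : G, ω x = ⊤ ↔ x = 1) : ω (1 : G) = ⊤ := (htop 1).mpr rfl

lemma omega_inv (hquot : ∀ x y : G, min (ω x) (ω y) ≤ ω (x * y⁻¹))
    (htop : ∀ x : G, ω x = ⊤ ↔ x = 1) : ∀ x : G, ω x⁻¹ = ω x := by
  have h : ∀ x : G, ω x ≤ ω x⁻¹ := by
    intro x
    have := hquot 1 x
    rw [one_mul] at this
    simpa [omega_one htop] using this
  intro x
  refine le_antisymm ?_ (h x)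
  simpa using h x⁻¹

lemma omega_mul (hquot : ∀ x y : G, min (ω x) (ω y) ≤ ω (x * y⁻¹))
    (htop : ∀ x : G, ω x = ⊤ ↔ x = 1) (x y : G) :
    min (ω x) (ω y) ≤ ω (x * y) := by
  have := hquot x y⁻¹
  rwa [inv_inv, omega_inv hquot htop] at this

lemma omega_mul_le (hquot : ∀ x y : G, min (ω x) (ω y) ≤ ω (x * y⁻¹))
    (htop : ∀ x : G, ω x = ⊤ ↔ x = 1) {b : WithTop ℝ} {x y : G}
    (hx : b ≤ ω x) (hy : b ≤ ω y) : b ≤ ω (x * y) :=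
  le_trans (le_min hx hy) (omega_mul hquot htop x y)

lemma omega_listprod (hquot : ∀ x y : G, min (ω x) (ω y) ≤ ω (x * y⁻¹))
    (htop : ∀ x : G, ω x = ⊤ ↔ x = 1) :
    ∀ (l : List G) (b : WithTop ℝ), (∀ z ∈ l, b ≤ ω z) → b ≤ ω l.prod := by
  intro l
  induction l with
  | nil => intro b _; simp [omega_one htop]
  | cons a l ih =>
      intro b hb
      rw [List.prod_cons]
      exact omega_mul_le hquot htop (hb a (by simp)) (ih b fun z hz => hb z (by simp [hz]))

lemma omega_pow_le (hquot : ∀ x y : G, min (ω x) (ω y) ≤ ω (x * y⁻¹))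
    (htop : ∀ x : G, ω x = ⊤ ↔ x = 1) (x : G) :
    ∀ n : ℕ, n ≠ 0 → ω x ≤ ω (x ^ n) := by
  intro n
  induction n with
  | zero => intro h; exact absurd rfl h
  | succ n ih =>
      intro _
      rcases Nat.eq_zero_or_pos n with h0 | h0
      · simp [h0]
      · rw [pow_succ]
        exact omega_mul_le hquot htop (ih h0.ne') le_rfl

lemma omega_pow_p_pow (hpow : ∀ x : G, ω (x ^ p) = ω x + 1) (x : G) :
    ∀ r : ℕ, ω (x ^ p ^ r) = ω x + ((r : ℝ) : WithTop ℝ) := by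
  intro r
  induction r with
  | zero => simp
  | succ r ih =>
      rw [pow_succ, pow_mul, hpow, ih]
      rw [add_assoc]
      norm_cast

lemma omega_pow_dvd (hquot : ∀ x y : G, min (ω x) (ω y) ≤ ω (x * y⁻¹))
    (htop : ∀ x : G, ω x = ⊤ ↔ x = 1) (hpow : ∀ x : G, ω (x ^ p) = ω x + 1)
    (x : G) {C k : ℕ} (hdvd : p ^ k ∣ C) (hC : C ≠ 0) :
    ω x + ((k : ℝ) : WithTop ℝ) ≤ ω (x ^ C) := by
  obtain ⟨m, rfl⟩ := hdvd
  have hm : m ≠ 0 := by rintro rfl; simp at hC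
  rw [mul_comm, pow_mul, omega_pow_p_pow hpow]
  exact add_le_add_left (omega_pow_le hquot htop x m hm) _

lemma comm_bound (hquot : ∀ x y : G, min (ω x) (ω y) ≤ ω (x * y⁻¹))
    (htop : ∀ x : G, ω x = ⊤ ↔ x = 1)
    (hcomm : ∀ x y : G, ω x + ω y ≤ ω (x⁻¹ * y⁻¹ * x * y)) (a b : G) :
    ω a + ω b ≤ ω (a * b * a⁻¹ * b⁻¹) := by
  have := hcomm a⁻¹ b⁻¹
  rwa [inv_inv, inv_inv, omega_inv hquot htop, omega_inv hquot htop] at this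

lemma omega_nonneg (hp : p.Prime) (hgt : ∀ x : G, ((((p : ℝ) - 1)⁻¹ : ℝ) : WithTop ℝ) < ω x)
    (x : G) : ((0 : ℝ) : WithTop ℝ) ≤ ω x := by
  refine le_of_lt (lt_of_le_of_lt ?_ (hgt x))
  rw [WithTop.coe_le_coe]
  have h2 : (2 : ℝ) ≤ (p : ℝ) := by exact_mod_cast hp.two_le
  have : (1 : ℝ) ≤ (p : ℝ) - 1 := by linarith
  positivity

lemma omega_conj (hquot : ∀ x y : G, min (ω x) (ω y) ≤ ω (x * y⁻¹))
    (htop : ∀ x : G, ω x = ⊤ ↔ x = 1)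
    (hcomm : ∀ x y : G, ω x + ω y ≤ ω (x⁻¹ * y⁻¹ * x * y))
    (hp : p.Prime) (hgt : ∀ x : G, ((((p : ℝ) - 1)⁻¹ : ℝ) : WithTop ℝ) < ω x)
    (h x : G) : ω x ≤ ω (h * x * h⁻¹) := by
  have key : ω x ≤ ω (x⁻¹ * h * x * h⁻¹) := by
    have h2 := hcomm x h⁻¹
    rw [inv_inv, omega_inv hquot htop] at h2
    refine le_trans ?_ h2
    refine le_add_of_nonneg_right ?_
    simpa using omega_nonneg hp hgt h
  have he : h * x * h⁻¹ = x * (x⁻¹ * h * x * h⁻¹) := by group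
  rw [he]
  exact omega_mul_le hquot htop le_rfl key

lemma torsionfree (htop : ∀ x : G, ω x = ⊤ ↔ x = 1)
    (hpow : ∀ x : G, ω (x ^ p) = ω x + 1) {x : G} {r : ℕ}
    (h : x ^ p ^ r = 1) : x = 1 := by
  have h1 : ω (x ^ p ^ r) = ⊤ := (htop _).mpr h
  rw [omega_pow_p_pow hpow] at h1
  rcases WithTop.add_eq_top.mp h1 with h2 | h2
  · exact (htop x).mp h2
  · exact absurd h2 (WithTop.coe_ne_top)

/-- **Lemma A**: if `y ^ p` is central and the commutator `[y,x]` has value `> 1`,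
then `[y,x] = 1`. -/
lemma lemmaA (hquot : ∀ x y : G, min (ω x) (ω y) ≤ ω (x * y⁻¹))
    (hcomm : ∀ x y : G, ω x + ω y ≤ ω (x⁻¹ * y⁻¹ * x * y))
    (htop : ∀ x : G, ω x = ⊤ ↔ x = 1)
    (hgt : ∀ x : G, ((((p : ℝ) - 1)⁻¹ : ℝ) : WithTop ℝ) < ω x)
    (hpow : ∀ x : G, ω (x ^ p) = ω x + 1)
    (hp : p.Prime)
    (y : G) (hyc : y ^ p ∈ Subgroup.center G) (x : G)
    (h1 : ((1 : ℝ) : WithTop ℝ) < ω (y * x * y⁻¹ * x⁻¹)) :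
    y * x * y⁻¹ * x⁻¹ = 1 := by
  by_contra hne
  set u : G := y * x * y⁻¹ * x⁻¹ with hu_def
  -- values
  obtain ⟨v0, hv0⟩ : ∃ v : ℝ, ω u = (v : WithTop ℝ) := by
    rcases Option.ne_none_iff_exists.mp (fun h => hne ((htop u).mp h)) with ⟨v, hv⟩
    exact ⟨v, hv.symm⟩
  have hy1 : y ≠ 1 := by
    rintro rfl
    apply hne
    simp [hu_def]
  obtain ⟨t0, ht0⟩ : ∃ t : ℝ, ω y = (t : WithTop ℝ) := by
    rcases Option.ne_none_iff_exists.mp (fun h => hy1 ((htop y).mp h)) with ⟨t, ht⟩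
    exact ⟨t, ht.symm⟩
  have hv1 : (1 : ℝ) < v0 := by
    rw [hv0] at h1; exact_mod_cast h1
  have hpinv_pos : (0 : ℝ) < ((p : ℝ) - 1)⁻¹ := by
    have h2 : (2 : ℝ) ≤ (p : ℝ) := by exact_mod_cast hp.two_le
    have : (1 : ℝ) ≤ (p : ℝ) - 1 := by linarith
    positivity
  have ht0gt : ((p : ℝ) - 1)⁻¹ < t0 := by
    have := hgt y; rw [ht0] at this; exact_mod_cast this
  have ht0pos : (0 : ℝ) < t0 := lt_trans hpinv_pos ht0gt
  have hpt0 : (1 : ℝ) < ((p : ℝ) - 1) * t0 := by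
    have h2 : (2 : ℝ) ≤ (p : ℝ) := by exact_mod_cast hp.two_le
    have hp1 : (0 : ℝ) < (p : ℝ) - 1 := by linarith
    calc (1 : ℝ) = ((p : ℝ) - 1) * ((p : ℝ) - 1)⁻¹ := by field_simp
    _ < ((p : ℝ) - 1) * t0 := by
        exact mul_lt_mul_of_pos_left ht0gt hp1
  -- iterated commutators
  let U : ℕ → G := fun m => Nat.rec u (fun _ w => y * w * y⁻¹ * w⁻¹) m
  have hU0 : U 0 = u := rfl
  have hUs : ∀ m, U (m + 1) = y * U m * y⁻¹ * (U m)⁻¹ := fun m => rfl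
  have hUval : ∀ m : ℕ, ((v0 + m * t0 : ℝ) : WithTop ℝ) ≤ ω (U m) := by
    intro m
    induction m with
    | zero => simp [hU0, hv0]
    | succ m ih =>
        rw [hUs]
        refine le_trans ?_ (comm_bound hquot htop hcomm y (U m))
        rw [ht0]
        calc ((v0 + (m + 1 : ℕ) * t0 : ℝ) : WithTop ℝ)
            = ((t0 + (v0 + m * t0) : ℝ) : WithTop ℝ) := WithTop.coe_inj.mpr (by push_cast; ring)
          _ = ((t0 : ℝ) : WithTop ℝ) + ((v0 + m * t0 : ℝ) : WithTop ℝ) := by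
              rw [← WithTop.coe_add]
          _ ≤ ((t0 : ℝ) : WithTop ℝ) + ω (U m) := by exact add_le_add_right ih _
  have hUv0 : ∀ m : ℕ, ((v0 : ℝ) : WithTop ℝ) ≤ ω (U m) := by
    intro m
    refine le_trans ?_ (hUval m)
    rw [WithTop.coe_le_coe]
    have : (0:ℝ) ≤ (m : ℝ) * t0 := by positivity
    linarith
  -- the normal subgroup of elements of value ≥ 2 v0
  let N : Subgroup G :=
    { carrier := {z | ((2 * v0 : ℝ) : WithTop ℝ) ≤ ω z}
      one_mem' := by simp [omega_one htop]
      mul_mem' := fun ha hb => omega_mul_le hquot htop ha hb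
      inv_mem' := by
        intro a ha
        simpa [omega_inv hquot htop] using ha }
  have hNmem : ∀ z : G, ((2 * v0 : ℝ) : WithTop ℝ) ≤ ω z → z ∈ N := fun z hz => hz
  haveI hNnormal : N.Normal := by
    constructor
    intro n hn g
    exact le_trans hn (omega_conj hquot htop hcomm hp hgt g n)
  let π : G →* G ⧸ N := QuotientGroup.mk' N
  have hπ1 : ∀ z : G, ((2 * v0 : ℝ) : WithTop ℝ) ≤ ω z → π z = 1 := by
    intro z hz
    exact (QuotientGroup.eq_one_iff z).mpr (hNmem z hz)
  have hcommQ : ∀ a b : G, ((v0 : ℝ) : WithTop ℝ) ≤ ω a → ((v0 : ℝ) : WithTop ℝ) ≤ ω b →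
      Commute (π a) (π b) := by
    intro a b ha hb
    refine commutatorElement_eq_one_iff_commute.mp ?_
    rw [← map_commutatorElement]
    refine hπ1 _ ?_
    have h2 := comm_bound hquot htop hcomm a b
    refine le_trans ?_ h2
    calc ((2 * v0 : ℝ) : WithTop ℝ) = ((v0 : ℝ) : WithTop ℝ) + ((v0 : ℝ) : WithTop ℝ) := by
          rw [← WithTop.coe_add]; exact WithTop.coe_inj.mpr (by ring)
      _ ≤ ω a + ω b := add_le_add ha hb
  -- the commutative subgroup generated by the images of the `U m`
  let S : Set (G ⧸ N) := Set.range (fun m => π (U m))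
  let A : Subgroup (G ⧸ N) := Subgroup.closure S
  have hScomm : ∀ a ∈ S, ∀ b ∈ S, Commute a b := by
    rintro a ⟨i, rfl⟩ b ⟨j, rfl⟩
    exact hcommQ _ _ (hUv0 i) (hUv0 j)
  have hAcomm1 : ∀ a ∈ S, ∀ b ∈ A, Commute a b := by
    intro a ha b hb
    refine Subgroup.closure_induction (p := fun g _ => Commute a g) ?_ ?_ ?_ ?_ hb
    · exact fun g hg => hScomm a ha g hg
    · exact Commute.one_right a
    · exact fun g h _ _ hg hh => hg.mul_right hh
    · exact fun g _ hg => hg.inv_right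
  have hAcomm : ∀ a ∈ A, ∀ b ∈ A, Commute a b := by
    intro a ha b hb
    refine Subgroup.closure_induction (p := fun g _ => Commute g b) ?_ ?_ ?_ ?_ ha
    · exact fun g hg => hAcomm1 g hg b hb
    · exact Commute.one_left b
    · exact fun g h _ _ hg hh => hg.mul_left hh
    · exact fun g _ hg => hg.inv_left
  letI : CommGroup ↥A :=
    { (inferInstance : Group ↥A) with
      mul_comm := fun a b => Subtype.ext (hAcomm a.1 a.2 b.1 b.2) }
  let UA : ℕ → ↥A := fun m => ⟨π (U m), Subgroup.subset_closure ⟨m, rfl⟩⟩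
  -- conjugation by π y restricts to A
  have hconj_mem : ∀ a : G ⧸ N, a ∈ A → π y * a * (π y)⁻¹ ∈ A := by
    intro a ha
    refine Subgroup.closure_induction (p := fun g _ => π y * g * (π y)⁻¹ ∈ A) ?_ ?_ ?_ ?_ ha
    · rintro g ⟨m, rfl⟩
      have : π y * π (U m) * (π y)⁻¹ = π (U (m+1)) * π (U m) := by
        rw [← map_inv, ← map_mul, ← map_mul, ← map_mul]
        congr 1
        rw [hUs]
        group
      rw [this]
      exact Subgroup.mul_mem _ (Subgroup.subset_closure ⟨m+1, rfl⟩)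
        (Subgroup.subset_closure ⟨m, rfl⟩)
    · simpa using Subgroup.one_mem A
    · intro g h _ _ hg hh
      have : π y * (g * h) * (π y)⁻¹ = (π y * g * (π y)⁻¹) * (π y * h * (π y)⁻¹) := by group
      rw [this]; exact Subgroup.mul_mem _ hg hh
    · intro g _ hg
      have : π y * g⁻¹ * (π y)⁻¹ = (π y * g * (π y)⁻¹)⁻¹ := by group
      rw [this]; exact Subgroup.inv_mem _ hg
  let fA : ↥A →* ↥A :=
    MonoidHom.codRestrict ((MulAut.conj (π y)).toMonoidHom.comp A.subtype) A
      (fun a => by simpa [MulAut.conj] using hconj_mem a.1 a.2)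
  have hfA_coe : ∀ a : ↥A, (fA a : G ⧸ N) = π y * (a : G ⧸ N) * (π y)⁻¹ := by
    intro a; rfl
  have hfAUA : ∀ m : ℕ, fA (UA m) = UA (m+1) * UA m := by
    intro m
    refine Subtype.ext ?_
    rw [hfA_coe]
    show π y * π (U m) * (π y)⁻¹ = π (U (m+1)) * π (U m)
    rw [← map_inv, ← map_mul, ← map_mul, ← map_mul]
    congr 1
    rw [hUs]
    group
  -- the telescoped product identity
  let P : ℕ → G := fun n => Nat.rec 1 (fun _ w => y * w * y⁻¹ * u) n
  have hP0 : P 0 = 1 := rfl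
  have hPs : ∀ n, P (n + 1) = y * P n * y⁻¹ * u := fun n => rfl
  have hPconj : ∀ n : ℕ, y ^ n * x * (y ^ n)⁻¹ * x⁻¹ = P n := by
    intro n
    induction n with
    | zero => simp [hP0]
    | succ n ih =>
        rw [hPs, ← ih, hu_def, pow_succ']
        group
  have hPp : P p = 1 := by
    have hc := (Subgroup.mem_center_iff.mp hyc x).symm
    rw [← hPconj p, hc]
    group
  obtain ⟨k, hk⟩ : ∃ k, p = k + 1 := ⟨p - 1, (Nat.succ_pred_eq_of_pos hp.pos).symm⟩
  -- the binomial claim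
  have hClaim : ∀ n : ℕ, n ≤ p →
      π (P n) = ((∏ m ∈ Finset.range p, (UA m) ^ (n.choose (m + 1)) : ↥A) : G ⧸ N) := by
    intro n
    induction n with
    | zero =>
        intro _
        simp [hP0, Nat.choose_zero_succ]
    | succ n ih =>
        intro hnp
        have hnp' : n < p := hnp
        have ihh := ih (le_of_lt hnp')
        rw [hPs, map_mul, map_mul, map_mul, map_inv, ihh]
        have e1 : π y * ((∏ m ∈ Finset.range p, (UA m) ^ (n.choose (m + 1)) : ↥A) : G ⧸ N) *
            (π y)⁻¹ = ((fA (∏ m ∈ Finset.range p, (UA m) ^ (n.choose (m + 1))) : ↥A) : G ⧸ N) :=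
          (hfA_coe _).symm
        rw [e1]
        have e2 : π u = ((UA 0 : ↥A) : G ⧸ N) := rfl
        rw [e2, ← Subgroup.coe_mul]
        congr 1
        -- now a computation in the commutative group ↥A
        rw [map_prod]
        simp only [map_pow, hfAUA]
        simp only [mul_pow]
        rw [Finset.prod_mul_distrib]
        have hA1 : (∏ m ∈ Finset.range p, UA (m + 1) ^ (n.choose (m + 1)))
            = ∏ m ∈ Finset.range k, UA (m + 1) ^ (n.choose (m + 1)) := by
          rw [hk, Finset.prod_range_succ, Nat.choose_eq_zero_of_lt (by omega : n < k + 1),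
            pow_zero, mul_one]
        have hA2 : (∏ m ∈ Finset.range p, UA m ^ (n.choose m))
            = (∏ m ∈ Finset.range k, UA (m + 1) ^ (n.choose (m + 1))) * UA 0 := by
          rw [hk, Finset.prod_range_succ']
          simp [Nat.choose_zero_right]
        have hA3 : (∏ m ∈ Finset.range p, UA m ^ ((n + 1).choose (m + 1)))
            = (∏ m ∈ Finset.range p, UA m ^ (n.choose m)) *
              (∏ m ∈ Finset.range p, UA m ^ (n.choose (m + 1))) := by
          rw [← Finset.prod_mul_distrib]
          refine Finset.prod_congr rfl ?_
          intro m _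
          rw [← pow_add, Nat.choose_succ_succ]
        rw [hA1, hA3, hA2]
        exact (mul_right_comm _ _ _).symm
  have h1Q : ((∏ m ∈ Finset.range p, (UA m) ^ (p.choose (m + 1)) : ↥A) : G ⧸ N) = 1 := by
    rw [← hClaim p le_rfl, hPp, map_one]
  -- split off the m = 0 factor
  let fB : ℕ → ↥A := fun m => (UA m) ^ (p.choose (m + 1))
  have hsplit : (∏ m ∈ Finset.range p, fB m)
      = (∏ m ∈ Finset.range k, (UA (m + 1)) ^ (p.choose (m + 2))) * (UA 0) ^ p := by
    have : (∏ m ∈ Finset.range p, fB m) = (∏ m ∈ Finset.range k, fB (m + 1)) * fB 0 := by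
      rw [hk]; exact Finset.prod_range_succ' fB k
    rw [this]
    congr 1
    show (UA 0) ^ (p.choose 1) = (UA 0) ^ p
    rw [Nat.choose_one_right]
  -- the G-side product
  let FG : ℕ → G := fun i => U (i + 1) ^ (p.choose (i + 2))
  let RG : G := ((List.range k).map FG).prod
  have hπlist : ∀ j : ℕ, π (((List.range j).map FG).prod)
      = ((∏ m ∈ Finset.range j, (UA (m + 1)) ^ (p.choose (m + 2)) : ↥A) : G ⧸ N) := by
    intro j
    induction j with
    | zero => simp
    | succ j ih =>
        rw [List.range_succ, List.map_append, List.prod_append, map_mul]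
        simp only [List.map_cons, List.map_nil, List.prod_cons, List.prod_nil, mul_one]
        rw [ih, Finset.prod_range_succ, Subgroup.coe_mul]
        congr 1
  have hWQ : π (u ^ p * RG) = 1 := by
    rw [map_mul, map_pow]
    have e2 : π u = ((UA 0 : ↥A) : G ⧸ N) := rfl
    rw [e2, hπlist k, ← SubgroupClass.coe_pow, ← Subgroup.coe_mul]
    rw [show (UA 0) ^ p * (∏ m ∈ Finset.range k, UA (m + 1) ^ (p.choose (m + 2)))
        = ∏ m ∈ Finset.range p, fB m from by rw [hsplit]; exact mul_comm _ _]
    exact h1Q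
  have hWmem : u ^ p * RG ∈ N := (QuotientGroup.eq_one_iff _).mp hWQ
  have hWval : ((2 * v0 : ℝ) : WithTop ℝ) ≤ ω (u ^ p * RG) := hWmem
  -- value of RG
  set ε0 : ℝ := min t0 (((p : ℝ) - 1) * t0 - 1) with hε0_def
  have hε0 : 0 < ε0 := lt_min ht0pos (by linarith)
  have hRGval : ((v0 + 1 + ε0 : ℝ) : WithTop ℝ) ≤ ω RG := by
    refine omega_listprod hquot htop _ _ ?_
    intro z hz
    rw [List.mem_map] at hz
    obtain ⟨i, hi, rfl⟩ := hz
    rw [List.mem_range] at hi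
    by_cases hip : i + 2 = p
    · have hch : p.choose (i + 2) = 1 := by rw [hip, Nat.choose_self]
      show ((v0 + 1 + ε0 : ℝ) : WithTop ℝ) ≤ ω (U (i + 1) ^ (p.choose (i + 2)))
      rw [hch, pow_one]
      refine le_trans ?_ (hUval (i + 1))
      rw [WithTop.coe_le_coe]
      have hcast : (i : ℝ) + 2 = (p : ℝ) := by exact_mod_cast hip
      have hi1 : ((i + 1 : ℕ) : ℝ) = (p : ℝ) - 1 := by push_cast; linarith
      rw [hi1]
      have hε : ε0 ≤ ((p : ℝ) - 1) * t0 - 1 := min_le_right _ _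
      linarith
    · have hlt : i + 2 < p := lt_of_le_of_ne (by omega) hip
      have hdvd : p ∣ p.choose (i + 2) := hp.dvd_choose_self (by omega) hlt
      have hC : p.choose (i + 2) ≠ 0 := (Nat.choose_pos (le_of_lt hlt)).ne'
      have hb := omega_pow_dvd hquot htop hpow (U (i + 1)) (k := 1) (by simpa using hdvd) hC
      show ((v0 + 1 + ε0 : ℝ) : WithTop ℝ) ≤ ω (U (i + 1) ^ (p.choose (i + 2)))
      refine le_trans ?_ hb
      have hb2 := hUval (i + 1)
      have hε : ε0 ≤ t0 := min_le_left _ _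
      calc ((v0 + 1 + ε0 : ℝ) : WithTop ℝ)
          ≤ ((v0 + (i + 1 : ℕ) * t0 + 1 : ℝ) : WithTop ℝ) := by
            rw [WithTop.coe_le_coe]
            have h1t : t0 ≤ ((i + 1 : ℕ) : ℝ) * t0 := by
              have : (1 : ℝ) ≤ ((i + 1 : ℕ) : ℝ) := by exact_mod_cast Nat.one_le_iff_ne_zero.mpr (Nat.succ_ne_zero i)
              nlinarith
            linarith
        _ = ((v0 + (i + 1 : ℕ) * t0 : ℝ) : WithTop ℝ) + (((1 : ℕ) : ℝ) : WithTop ℝ) := by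
            rw [← WithTop.coe_add]; norm_num
        _ ≤ ω (U (i + 1)) + (((1 : ℕ) : ℝ) : WithTop ℝ) := add_le_add_left hb2 _
  -- the contradiction
  set c0 : ℝ := min (v0 - 1) ε0 with hc0_def
  have hc0 : 0 < c0 := lt_min (by linarith) hε0
  have hupval : ω (u ^ p) = ((v0 + 1 : ℝ) : WithTop ℝ) := by
    rw [hpow, hv0, ← WithTop.coe_one, ← WithTop.coe_add]
  have hbig : ((v0 + 1 + c0 : ℝ) : WithTop ℝ) ≤ ω (u ^ p) := by
    have hrew : u ^ p = (u ^ p * RG) * RG⁻¹ := by group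
    rw [hrew]
    refine omega_mul_le hquot htop ?_ ?_
    · refine le_trans ?_ hWval
      rw [WithTop.coe_le_coe]
      have : c0 ≤ v0 - 1 := min_le_left _ _
      linarith
    · rw [omega_inv hquot htop]
      refine le_trans ?_ hRGval
      rw [WithTop.coe_le_coe]
      have : c0 ≤ ε0 := min_le_right _ _
      linarith
  rw [hupval, WithTop.coe_le_coe] at hbig
  linarith

/-- **Key theorem**: any element whose `p`-th power is central is itself central. -/
lemma root_central (hquot : ∀ x y : G, min (ω x) (ω y) ≤ ω (x * y⁻¹))
    (hcomm : ∀ x y : G, ω x + ω y ≤ ω (x⁻¹ * y⁻¹ * x * y))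
    (htop : ∀ x : G, ω x = ⊤ ↔ x = 1)
    (hgt : ∀ x : G, ((((p : ℝ) - 1)⁻¹ : ℝ) : WithTop ℝ) < ω x)
    (hpow : ∀ x : G, ω (x ^ p) = ω x + 1)
    (hp : p.Prime)
    (y : G) (hyc : y ^ p ∈ Subgroup.center G) : y ∈ Subgroup.center G := by
  by_cases hy1 : y = 1
  · rw [hy1]; exact Subgroup.one_mem _
  obtain ⟨t0, ht0⟩ : ∃ t : ℝ, ω y = (t : WithTop ℝ) := by
    rcases Option.ne_none_iff_exists.mp (fun h => hy1 ((htop y).mp h)) with ⟨t, ht⟩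
    exact ⟨t, ht.symm⟩
  have hpinv_pos : (0 : ℝ) < ((p : ℝ) - 1)⁻¹ := by
    have h2 : (2 : ℝ) ≤ (p : ℝ) := by exact_mod_cast hp.two_le
    have : (1 : ℝ) ≤ (p : ℝ) - 1 := by linarith
    positivity
  have ht0gt : ((p : ℝ) - 1)⁻¹ < t0 := by
    have := hgt y; rw [ht0] at this; exact_mod_cast this
  have ht0pos : (0 : ℝ) < t0 := lt_trans hpinv_pos ht0gt
  have desc : ∀ n : ℕ, ∀ x : G,
      ((1 - (n : ℝ) * t0 : ℝ) : WithTop ℝ) < ω (y * x * y⁻¹ * x⁻¹) →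
      y * x * y⁻¹ * x⁻¹ = 1 := by
    intro n
    induction n with
    | zero =>
        intro x hx
        refine lemmaA hquot hcomm htop hgt hpow hp y hyc x ?_
        simpa using hx
    | succ n ih =>
        intro x hx
        by_cases hu : y * x * y⁻¹ * x⁻¹ = 1
        · exact hu
        set u := y * x * y⁻¹ * x⁻¹ with hu_def
        have h2 : ((1 - (n : ℝ) * t0 : ℝ) : WithTop ℝ) < ω (y * u * y⁻¹ * u⁻¹) := by
          refine lt_of_lt_of_le ?_ (comm_bound hquot htop hcomm y u)
          rw [ht0]
          calc ((1 - (n : ℝ) * t0 : ℝ) : WithTop ℝ)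
              = ((t0 : ℝ) : WithTop ℝ) + ((1 - ((n + 1 : ℕ) : ℝ) * t0 : ℝ) : WithTop ℝ) := by
                rw [← WithTop.coe_add]
                exact WithTop.coe_inj.mpr (by push_cast; ring)
            _ < ((t0 : ℝ) : WithTop ℝ) + ω u := WithTop.add_lt_add_left WithTop.coe_ne_top hx
        have h3 := ih u h2
        have hyu : y * u * y⁻¹ = u := mul_inv_eq_one.mp h3
        have hpowconj : ∀ m : ℕ, y ^ m * x * (y ^ m)⁻¹ = u ^ m * x := by
          intro m
          induction m with
          | zero => simp
          | succ m ihm =>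
              have e1 : y ^ (m + 1) * x * (y ^ (m + 1))⁻¹
                  = y * (y ^ m * x * (y ^ m)⁻¹) * y⁻¹ := by
                rw [pow_succ']; group
              rw [e1, ihm]
              have hyum : y * u ^ m * y⁻¹ = u ^ m := by
                have h4 : (MulAut.conj y) (u ^ m) = ((MulAut.conj y) u) ^ m := map_pow _ _ _
                rw [MulAut.conj_apply, MulAut.conj_apply, hyu] at h4
                exact h4
              have e3 : y * x * y⁻¹ = u * x := by rw [hu_def]; group
              calc y * (u ^ m * x) * y⁻¹
                  = (y * u ^ m * y⁻¹) * (y * x * y⁻¹) := by group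
                _ = u ^ m * (u * x) := by rw [hyum, e3]
                _ = u ^ (m + 1) * x := by rw [pow_succ]; exact (mul_assoc _ _ _).symm
        have hfin := hpowconj p
        have hcent := Subgroup.mem_center_iff.mp hyc x
        have h5 : u ^ p * x = x := by
          rw [← hfin, ← hcent]
          group
        have hup1 : u ^ p = 1 := by
          have := h5
          nth_rewrite 2 [← one_mul x] at this
          exact mul_right_cancel this
        exact torsionfree htop hpow (r := 1) (by simpa using hup1)
  obtain ⟨n, hn⟩ : ∃ n : ℕ, 1 - (n : ℝ) * t0 < ((p : ℝ) - 1)⁻¹ := by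
    obtain ⟨n, hn⟩ := exists_nat_gt ((1 - ((p : ℝ) - 1)⁻¹) / t0)
    refine ⟨n, ?_⟩
    rw [div_lt_iff₀ ht0pos] at hn
    nlinarith
  rw [Subgroup.mem_center_iff]
  intro g
  have hcg : y * g * y⁻¹ * g⁻¹ = 1 := by
    refine desc n g (lt_trans ?_ (hgt _))
    exact WithTop.coe_lt_coe.mpr hn
  have h6 : y * g * y⁻¹ = g := mul_inv_eq_one.mp hcg
  have h7 : y * g = g * y := by
    conv_rhs => rw [← h6]
    group
  exact h7.symm

lemma center_apply_aut (e : MulAut G) {z : G} (hz : z ∈ Subgroup.center G) :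
    e z ∈ Subgroup.center G := by
  rw [Subgroup.mem_center_iff] at hz ⊢
  intro g
  have h1 := hz (e.symm g)
  have h2 := congrArg e h1
  simpa [map_mul] using h2

lemma commute_of_center {z : G} (hz : z ∈ Subgroup.center G) (g : G) : Commute g z :=
  Subgroup.mem_center_iff.mp hz g

lemma Acent (φ : MulAut G) (hZ : ∀ g : G, φ g * g⁻¹ ∈ Subgroup.center G) :
    ∀ (n : ℕ) (x : G), (φ ^ n) x * x⁻¹ ∈ Subgroup.center G := by
  intro n
  induction n with
  | zero => intro x; simp [Subgroup.one_mem]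
  | succ n ih =>
      intro x
      have key : (φ ^ (n + 1)) x * x⁻¹ = φ ((φ ^ n) x * x⁻¹) * (φ x * x⁻¹) := by
        rw [pow_succ', MulAut.mul_apply, map_mul, map_inv]
        group
      rw [key]
      exact Subgroup.mul_mem _ (center_apply_aut φ (ih x)) (hZ x)

lemma pow_ge_lin (hp : p.Prime) : ∀ β : ℕ, β * (p - 1) + 1 ≤ p ^ β := by
  intro β
  induction β with
  | zero => simp
  | succ β ih =>
      have hp1 : 1 ≤ p := hp.pos
      calc (β + 1) * (p - 1) + 1 = β * (p - 1) + (p - 1) + 1 := by ring_nf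
        _ ≤ β * (p - 1) * p + (p - 1) + 1 := by
            have : β * (p - 1) ≤ β * (p - 1) * p := Nat.le_mul_of_pos_right _ hp.pos
            omega
        _ = (β * (p - 1) + 1) * p + (p - 1) + 1 - p := by
            have : 1 * p = p := one_mul p
            have h2 : 2 ≤ p := hp.two_le
            cases' Nat.exists_eq_add_of_le h2 with c hc
            subst hc
            ring_nf
            omega
        _ ≤ p ^ β * p + (p - 1) + 1 - p := by
            have := Nat.mul_le_mul_right p ih
            omega
        _ ≤ p ^ β * p := by
            have h2 : 2 ≤ p := hp.two_le
            have : 1 * p ≤ p ^ β * p := Nat.mul_le_mul_right p (Nat.one_le_pow _ _ hp.pos)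
            omega
        _ = p ^ (β + 1) := (pow_succ p β).symm

open scoped IsMulCommutative in
lemma omega_subprod (hquot : ∀ x y : G, min (ω x) (ω y) ≤ ω (x * y⁻¹))
    (htop : ∀ x : G, ω x = ⊤ ↔ x = 1)
    (s : Finset ℕ) (f : ℕ → ↥(Subgroup.center G)) (b : WithTop ℝ)
    (hf : ∀ j ∈ s, b ≤ ω (f j : G)) :
    b ≤ ω ((∏ j ∈ s, f j : ↥(Subgroup.center G)) : G) := by
  classical
  induction s using Finset.induction_on with
  | empty => simp [omega_one htop]
  | insert a s hnotmem ih =>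
      rw [Finset.prod_insert hnotmem]
      rw [Subgroup.coe_mul]
      exact omega_mul_le hquot htop (hf a (by simp)) (ih fun j hj => hf j (by simp [hj]))

lemma choose_dvd_pow (hp : p.Prime) {r j : ℕ} (hj : j < p ^ r) :
    p ^ (r - (j + 1).factorization p) ∣ (p ^ r).choose (j + 1) := by
  set β := (j + 1).factorization p with hβdef
  have hppos : 0 < p ^ r := pow_pos hp.pos r
  have hkey : p ^ r ∣ (p ^ r).choose (j + 1) * (j + 1) := by
    have h1 := Nat.add_one_mul_choose_eq (p ^ r - 1) j
    have h2 : p ^ r - 1 + 1 = p ^ r := Nat.succ_pred_eq_of_pos hppos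
    rw [h2] at h1
    exact ⟨(p ^ r - 1).choose j, h1.symm⟩
  have hord : p ^ β * ((j + 1) / p ^ β) = j + 1 := Nat.ordProj_mul_ordCompl_eq_self (j + 1) p
  set m := (j + 1) / p ^ β with hmdef
  have hnm : ¬ p ∣ m := Nat.not_dvd_ordCompl hp (Nat.succ_ne_zero j)
  have hβr : β ≤ r := by
    have h1 : p ^ β ∣ j + 1 := Nat.ordProj_dvd _ _
    have h2 : p ^ β ≤ p ^ r := le_trans (Nat.le_of_dvd (Nat.succ_pos j) h1) hj
    exact (Nat.pow_le_pow_iff_right hp.one_lt).mp h2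
  have hsplit : p ^ r = p ^ (r - β) * p ^ β := by
    rw [← pow_add]
    congr 1
    omega
  have hkey2 : p ^ (r - β) * p ^ β ∣ ((p ^ r).choose (j + 1) * m) * p ^ β := by
    rw [← hsplit]
    calc p ^ r ∣ (p ^ r).choose (j + 1) * (j + 1) := hkey
      _ = (p ^ r).choose (j + 1) * m * p ^ β := by rw [← hord]; ring
  have hkey3 : p ^ (r - β) ∣ (p ^ r).choose (j + 1) * m :=
    (Nat.mul_dvd_mul_iff_right (pow_pos hp.pos β)).mp hkey2
  exact (Nat.Coprime.pow_left _ ((hp.coprime_iff_not_dvd).mpr hnm)).dvd_of_dvd_mul_right hkey3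

open scoped IsMulCommutative in
lemma omega_A_ge (hquot : ∀ x y : G, min (ω x) (ω y) ≤ ω (x * y⁻¹))
    (htop : ∀ x : G, ω x = ⊤ ↔ x = 1)
    (hpow : ∀ x : G, ω (x ^ p) = ω x + 1)
    (hp : p.Prime) (φ : MulAut G)
    (hZ : ∀ g : G, φ g * g⁻¹ ∈ Subgroup.center G)
    {d : ℝ} (hd : ((p : ℝ) - 1)⁻¹ < d)
    (hdeg : ∀ g : G, ω g + (d : WithTop ℝ) ≤ ω (φ g * g⁻¹))
    (r : ℕ) (x : G) :
    ω (φ x * x⁻¹) + ((r : ℝ) : WithTop ℝ) ≤ ω ((φ ^ p ^ r) x * x⁻¹) := by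
  classical
  set Z := Subgroup.center G with hZdef
  let φZ : ↥Z →* ↥Z :=
    MonoidHom.codRestrict ((φ.toMonoidHom).comp Z.subtype) Z
      (fun a => center_apply_aut φ a.2)
  let T : ℕ → ↥Z := fun j =>
    Nat.rec (motive := fun _ => ↥Z) (⟨φ x * x⁻¹, hZ x⟩ : ↥Z)
      (fun _ w => (⟨φ (w : G) * (w : G)⁻¹, hZ (w : G)⟩ : ↥Z)) j
  have hT0 : ((T 0 : ↥Z) : G) = φ x * x⁻¹ := rfl
  have hTs : ∀ j, ((T (j + 1) : ↥Z) : G) = φ ((T j : ↥Z) : G) * ((T j : ↥Z) : G)⁻¹ :=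
    fun j => rfl
  have hφT : ∀ j, φZ (T j) = T (j + 1) * T j := by
    intro j
    refine Subtype.ext ?_
    show φ ((T j : ↥Z) : G) = ((T (j + 1) : ↥Z) : G) * ((T j : ↥Z) : G)
    rw [hTs]
    group
  have hTval : ∀ j : ℕ, ω (φ x * x⁻¹) + ((((j : ℝ) * d) : ℝ) : WithTop ℝ)
      ≤ ω ((T j : ↥Z) : G) := by
    intro j
    induction j with
    | zero => simpa [hT0] using le_refl (ω (φ x * x⁻¹))
    | succ j ih =>
        have h1 := hdeg ((T j : ↥Z) : G)
        rw [← hTs j] at h1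
        calc ω (φ x * x⁻¹) + ((((j + 1 : ℕ) : ℝ) * d : ℝ) : WithTop ℝ)
            = (ω (φ x * x⁻¹) + (((j : ℝ) * d : ℝ) : WithTop ℝ)) + ((d : ℝ) : WithTop ℝ) := by
              rw [add_assoc, ← WithTop.coe_add]
              exact congrArg _ (WithTop.coe_inj.mpr (by push_cast; ring))
          _ ≤ ω ((T j : ↥Z) : G) + ((d : ℝ) : WithTop ℝ) := add_le_add_left ih _
          _ ≤ ω ((T (j + 1) : ↥Z) : G) := h1
  have hI : ∀ n : ℕ, (φ ^ n) x * x⁻¹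
      = ((∏ j ∈ Finset.range n, (T j) ^ (n.choose (j + 1)) : ↥Z) : G) := by
    intro n
    induction n with
    | zero => simp
    | succ n ih =>
        have key : (φ ^ (n + 1)) x * x⁻¹ = φ ((φ ^ n) x * x⁻¹) * (φ x * x⁻¹) := by
          rw [pow_succ', MulAut.mul_apply, map_mul, map_inv]
          group
        rw [key, ih]
        have e0 : φ (((∏ j ∈ Finset.range n, (T j) ^ (n.choose (j + 1)) : ↥Z) : G))
            = ((φZ (∏ j ∈ Finset.range n, (T j) ^ (n.choose (j + 1))) : ↥Z) : G) := rfl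
        rw [e0]
        have e2 : φ x * x⁻¹ = ((T 0 : ↥Z) : G) := rfl
        rw [e2, ← Subgroup.coe_mul]
        congr 1
        rw [map_prod]
        simp only [map_pow, hφT, mul_pow]
        rw [Finset.prod_mul_distrib]
        have hA1 : (∏ j ∈ Finset.range n, T j ^ (n.choose (j + 1)))
            = ∏ j ∈ Finset.range (n + 1), T j ^ (n.choose (j + 1)) := by
          rw [Finset.prod_range_succ, Nat.choose_succ_self, pow_zero, mul_one]
        have hA2 : (∏ j ∈ Finset.range (n + 1), T j ^ (n.choose j))
            = (∏ j ∈ Finset.range n, T (j + 1) ^ (n.choose (j + 1))) * T 0 := by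
          rw [Finset.prod_range_succ']
          simp [Nat.choose_zero_right]
        have hA3 : (∏ j ∈ Finset.range (n + 1), T j ^ ((n + 1).choose (j + 1)))
            = (∏ j ∈ Finset.range (n + 1), T j ^ (n.choose j)) *
              (∏ j ∈ Finset.range (n + 1), T j ^ (n.choose (j + 1))) := by
          rw [← Finset.prod_mul_distrib]
          refine Finset.prod_congr rfl ?_
          intro m _
          rw [← pow_add, Nat.choose_succ_succ]
        rw [hA3, hA2, ← hA1]
        exact mul_right_comm _ _ _
  rw [hI (p ^ r)]
  refine omega_subprod hquot htop _ _ _ ?_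
  intro j hj
  rw [Finset.mem_range] at hj
  have hC : (p ^ r).choose (j + 1) ≠ 0 := (Nat.choose_pos hj).ne'
  have hdvd := choose_dvd_pow hp hj
  set β := (j + 1).factorization p with hβdef
  have hβr : β ≤ r := by
    have h1 : p ^ β ∣ j + 1 := Nat.ordProj_dvd _ _
    have h2 : p ^ β ≤ p ^ r := le_trans (Nat.le_of_dvd (Nat.succ_pos j) h1) hj
    exact (Nat.pow_le_pow_iff_right hp.one_lt).mp h2
  have hβj : β * (p - 1) ≤ j := by
    have h1 : p ^ β ∣ j + 1 := Nat.ordProj_dvd _ _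
    have h2 : p ^ β ≤ j + 1 := Nat.le_of_dvd (Nat.succ_pos j) h1
    have h3 := pow_ge_lin hp β
    omega
  have hstep := omega_pow_dvd hquot htop hpow ((T j : ↥Z) : G) hdvd hC
  have hcoe : ((T j ^ ((p ^ r).choose (j + 1)) : ↥Z) : G)
      = ((T j : ↥Z) : G) ^ ((p ^ r).choose (j + 1)) := SubgroupClass.coe_pow _ _
  rw [hcoe]
  refine le_trans ?_ hstep
  refine le_trans ?_ (add_le_add_left (hTval j) _)
  rw [add_assoc]
  refine add_le_add_right ?_ _
  rw [← WithTop.coe_add, WithTop.coe_le_coe]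
  have hc1 : ((r - β : ℕ) : ℝ) = (r : ℝ) - (β : ℝ) := Nat.cast_sub hβr
  rw [hc1]
  have h2r : (2 : ℝ) ≤ (p : ℝ) := by exact_mod_cast hp.two_le
  have hd0 : (0 : ℝ) < (p : ℝ) - 1 := by linarith
  have hcast : ((β : ℝ)) * ((p : ℝ) - 1) ≤ (j : ℝ) := by
    have h4 : ((β * (p - 1) : ℕ) : ℝ) ≤ ((j : ℕ) : ℝ) := Nat.cast_le.mpr hβj
    have h5 : (((p - 1 : ℕ)) : ℝ) = (p : ℝ) - 1 := by
      rw [Nat.cast_sub hp.pos]; norm_num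
    rw [Nat.cast_mul, h5] at h4
    exact h4
  have hβd : (β : ℝ) ≤ (j : ℝ) * d := by
    have h4 : (β : ℝ) ≤ (j : ℝ) / ((p : ℝ) - 1) := by
      rw [le_div_iff₀ hd0]; exact hcast
    calc (β : ℝ) ≤ (j : ℝ) / ((p : ℝ) - 1) := h4
      _ = (j : ℝ) * ((p : ℝ) - 1)⁻¹ := div_eq_mul_inv _ _
      _ ≤ (j : ℝ) * d := mul_le_mul_of_nonneg_left (le_of_lt hd) (Nat.cast_nonneg j)
  linarith

lemma cauchy_num (hquot : ∀ x y : G, min (ω x) (ω y) ≤ ω (x * y⁻¹))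
    (htop : ∀ x : G, ω x = ⊤ ↔ x = 1)
    (hpow : ∀ x : G, ω (x ^ p) = ω x + 1)
    (hp : p.Prime) (φ : MulAut G)
    (hZ : ∀ g : G, φ g * g⁻¹ ∈ Subgroup.center G)
    {d : ℝ} (hd : ((p : ℝ) - 1)⁻¹ < d)
    (hdeg : ∀ g : G, ω g + (d : WithTop ℝ) ≤ ω (φ g * g⁻¹))
    (r : ℕ) (x : G) :
    ω ((φ ^ p ^ r) x * x⁻¹) + ((d + r : ℝ) : WithTop ℝ)
      ≤ ω (((φ ^ p ^ (r + 1)) x * x⁻¹) * (((φ ^ p ^ r) x * x⁻¹) ^ p)⁻¹) := by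
  have hpinv_pos : (0 : ℝ) < ((p : ℝ) - 1)⁻¹ := by
    have h2 : (2 : ℝ) ≤ (p : ℝ) := by exact_mod_cast hp.two_le
    have : (1 : ℝ) ≤ (p : ℝ) - 1 := by linarith
    positivity
  have hd0 : (0 : ℝ) < d := lt_trans hpinv_pos hd
  set ψ := φ ^ p ^ r with hψdef
  set α := ψ x * x⁻¹ with hαdef
  have hψdeg : ∀ z : G, ω z + ((d + r : ℝ) : WithTop ℝ) ≤ ω (ψ z * z⁻¹) := by
    intro z
    have h1 := omega_A_ge hquot htop hpow hp φ hZ hd hdeg r z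
    have h2 := hdeg z
    calc ω z + ((d + r : ℝ) : WithTop ℝ)
        = (ω z + ((d : ℝ) : WithTop ℝ)) + ((r : ℝ) : WithTop ℝ) := by
          rw [add_assoc, ← WithTop.coe_add]
      _ ≤ ω (φ z * z⁻¹) + ((r : ℝ) : WithTop ℝ) := add_le_add_left h2 _
      _ ≤ ω (ψ z * z⁻¹) := h1
  have hdrpos : (0 : ℝ) ≤ d + r := by positivity
  have hψge : ∀ z : G, ω z ≤ ω (ψ z) := by
    intro z
    have h1 : ψ z = (ψ z * z⁻¹) * z := by group
    rw [h1]
    refine omega_mul_le hquot htop ?_ le_rfl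
    refine le_trans ?_ (hψdeg z)
    refine le_add_of_nonneg_right ?_
    exact_mod_cast WithTop.coe_le_coe.mpr hdrpos
  have hαc : α ∈ Subgroup.center G := Acent φ hZ _ x
  have hAαc : ψ α * α⁻¹ ∈ Subgroup.center G := Acent φ hZ _ α
  have hcomm1 : Commute α (ψ α * α⁻¹) := commute_of_center hAαc α
  have hψα : ψ α = (ψ α * α⁻¹) * α := by group
  have hpowsplit : ∀ n : ℕ, (ψ α) ^ n = (ψ α * α⁻¹) ^ n * α ^ n := by
    intro n
    conv_lhs => rw [hψα]
    exact (hcomm1.symm).mul_pow n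
  have hE : ∀ n : ℕ, ω α + ((d + r : ℝ) : WithTop ℝ)
      ≤ ω ((ψ ^ n) x * x⁻¹ * (α ^ n)⁻¹) := by
    intro n
    induction n with
    | zero =>
        simp only [pow_zero, MulAut.one_apply, mul_inv_cancel, inv_one, mul_one, one_mul]
        rw [omega_one htop]
        exact le_top
    | succ n ih =>
        have key : (ψ ^ (n + 1)) x * x⁻¹ = ψ ((ψ ^ n) x * x⁻¹) * α := by
          rw [pow_succ', MulAut.mul_apply, map_mul, map_inv, hαdef]
          group
        have l1 : α * (α ^ (n + 1))⁻¹ = (α ^ n)⁻¹ := by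
          rw [pow_succ, mul_inv_rev, ← mul_assoc, mul_inv_cancel, one_mul]
        have r1 : ψ (α ^ n) = (ψ α * α⁻¹) ^ n * α ^ n := by rw [map_pow, hpowsplit]
        have hEn : (ψ ^ (n + 1)) x * x⁻¹ * (α ^ (n + 1))⁻¹
            = ψ ((ψ ^ n) x * x⁻¹ * (α ^ n)⁻¹) * ((ψ α * α⁻¹) ^ n) := by
          calc (ψ ^ (n + 1)) x * x⁻¹ * (α ^ (n + 1))⁻¹
              = ψ ((ψ ^ n) x * x⁻¹) * (α * (α ^ (n + 1))⁻¹) := by rw [key, mul_assoc]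
            _ = ψ ((ψ ^ n) x * x⁻¹) * (α ^ n)⁻¹ := by rw [l1]
            _ = (ψ ((ψ ^ n) x * x⁻¹) * (ψ (α ^ n))⁻¹) * (ψ (α ^ n) * (α ^ n)⁻¹) := by group
            _ = ψ ((ψ ^ n) x * x⁻¹ * (α ^ n)⁻¹) * (ψ (α ^ n) * (α ^ n)⁻¹) := by
                conv_rhs => rw [map_mul, map_inv]
            _ = ψ ((ψ ^ n) x * x⁻¹ * (α ^ n)⁻¹) * ((ψ α * α⁻¹) ^ n) := by
                congr 1
                rw [r1, mul_assoc, mul_inv_cancel, mul_one]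
        rw [hEn]
        refine omega_mul_le hquot htop ?_ ?_
        · exact le_trans ih (hψge _)
        · rcases Nat.eq_zero_or_pos n with h0 | h0
          · rw [h0, pow_zero, omega_one htop]
            exact le_top
          · exact le_trans (hψdeg α) (omega_pow_le hquot htop _ n h0.ne')
  have hfin := hE p
  have hψp : (ψ ^ p) x = (φ ^ p ^ (r + 1)) x := by
    rw [hψdef, ← pow_mul, ← pow_succ]
  rw [hψp] at hfin
  exact hfin

lemma pow_central (hquot : ∀ x y : G, min (ω x) (ω y) ≤ ω (x * y⁻¹))
    (hcomm : ∀ x y : G, ω x + ω y ≤ ω (x⁻¹ * y⁻¹ * x * y))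
    (htop : ∀ x : G, ω x = ⊤ ↔ x = 1)
    (hgt : ∀ x : G, ((((p : ℝ) - 1)⁻¹ : ℝ) : WithTop ℝ) < ω x)
    (hpow : ∀ x : G, ω (x ^ p) = ω x + 1) (hp : p.Prime) :
    ∀ (r : ℕ) (y : G), y ^ p ^ r ∈ Subgroup.center G → y ∈ Subgroup.center G := by
  intro r
  induction r with
  | zero => intro y hy; simpa using hy
  | succ r ih =>
      intro y hy
      refine root_central hquot hcomm htop hgt hpow hp y (ih (y ^ p) ?_)
      rw [← pow_mul, ← pow_succ']
      exact hy

lemma root_unique (hquot : ∀ x y : G, min (ω x) (ω y) ≤ ω (x * y⁻¹))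
    (hcomm : ∀ x y : G, ω x + ω y ≤ ω (x⁻¹ * y⁻¹ * x * y))
    (htop : ∀ x : G, ω x = ⊤ ↔ x = 1)
    (hgt : ∀ x : G, ((((p : ℝ) - 1)⁻¹ : ℝ) : WithTop ℝ) < ω x)
    (hpow : ∀ x : G, ω (x ^ p) = ω x + 1) (hp : p.Prime) {r : ℕ} {a b : G}
    (hab : a ^ p ^ r = b ^ p ^ r) (hbcen : b ^ p ^ r ∈ Subgroup.center G) : a = b := by
  have hac : a ∈ Subgroup.center G :=
    pow_central hquot hcomm htop hgt hpow hp r a (hab ▸ hbcen)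
  have hcomm2 : Commute b a⁻¹ := (commute_of_center hac b).inv_right
  have h1 : (b * a⁻¹) ^ p ^ r = 1 := by
    rw [hcomm2.mul_pow, inv_pow, ← hab, mul_inv_cancel]
  exact (mul_inv_eq_one.mp (torsionfree htop hpow h1)).symm

lemma root_exists (hquot : ∀ x y : G, min (ω x) (ω y) ≤ ω (x * y⁻¹))
    (hcomm : ∀ x y : G, ω x + ω y ≤ ω (x⁻¹ * y⁻¹ * x * y))
    (htop : ∀ x : G, ω x = ⊤ ↔ x = 1)
    (hgt : ∀ x : G, ((((p : ℝ) - 1)⁻¹ : ℝ) : WithTop ℝ) < ω x)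
    (hpow : ∀ x : G, ω (x ^ p) = ω x + 1) (hp : p.Prime)
    (hsat : ∀ x : G, (((((p : ℝ) - 1)⁻¹ + 1 : ℝ)) : WithTop ℝ) < ω x → ∃ y : G, y ^ p = x) :
    ∀ (r : ℕ) (x : G), x ∈ Subgroup.center G →
      ((((p : ℝ) - 1)⁻¹ + r : ℝ) : WithTop ℝ) < ω x → ∃ y : G, y ^ p ^ r = x := by
  intro r
  induction r with
  | zero => intro x _ _; exact ⟨x, by simp⟩
  | succ r ih =>
      intro x hxc hxv
      have hsat_cond : (((((p : ℝ) - 1)⁻¹ + 1 : ℝ)) : WithTop ℝ) < ω x := by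
        refine lt_of_le_of_lt ?_ hxv
        rw [WithTop.coe_le_coe]
        have h1 : (1 : ℝ) ≤ ((r + 1 : ℕ) : ℝ) := by
          exact_mod_cast Nat.one_le_iff_ne_zero.mpr (Nat.succ_ne_zero r)
        linarith
      obtain ⟨y, hy⟩ := hsat x hsat_cond
      have hyc : y ∈ Subgroup.center G :=
        root_central hquot hcomm htop hgt hpow hp y (hy ▸ hxc)
      have hyval : ω y + (1 : WithTop ℝ) = ω x := by rw [← hpow, hy]
      have hyv : ((((p : ℝ) - 1)⁻¹ + r : ℝ) : WithTop ℝ) < ω y := by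
        rcases eq_or_ne (ω y) ⊤ with ht | ht
        · rw [ht]; exact WithTop.coe_lt_top _
        · obtain ⟨w, hw0⟩ := Option.ne_none_iff_exists.mp ht
          have hw : ((w : ℝ) : WithTop ℝ) = ω y := hw0
          rw [← hw] at hyval ⊢
          rw [WithTop.coe_lt_coe]
          rw [show ((w : ℝ) : WithTop ℝ) + (1 : WithTop ℝ) = ((w + 1 : ℝ) : WithTop ℝ) from by
            rw [← WithTop.coe_one, ← WithTop.coe_add]] at hyval
          rw [← hyval] at hxv
          rw [WithTop.coe_lt_coe] at hxv
          push_cast at hxv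
          linarith
      obtain ⟨z, hz⟩ := ih y hyc hyv
      refine ⟨z, ?_⟩
      rw [← hy, ← hz, ← pow_mul, ← pow_succ]

end Helpers



/-!
STATEMENT 10: Let `G` be a `p`-saturated group with `p`-valuation `ω`, and let `φ` be an
automorphism of `G` with `deg_ω(φ) > 1/(p-1)` such that `φ(g)g⁻¹` lies in the centre `Z` of
`G` for all `g`.  Then the map `z(φ) : G → G`, `z(φ)(g) = lim_{r→∞} (φ^{p^r}(g)g⁻¹)^{p^{-r}}`,
is a well-defined group homomorphism from `G` to `Z`:  for every `g` a compatible sequence of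
`p^r`-th roots of `φ^{p^r}(g)g⁻¹` exists, and every such sequence converges to `z(φ)(g)`.
-/
theorem log_of_central_automorphism_is_homomorphism
    (p : ℕ) (hp : p.Prime) (G : Type*) [Group G]
    (ω : G → WithTop ℝ)
    -- `ω` is a `p`-valuation:
    (hquot : ∀ x y : G, min (ω x) (ω y) ≤ ω (x * y⁻¹))
    (hcomm : ∀ x y : G, ω x + ω y ≤ ω (x⁻¹ * y⁻¹ * x * y))
    (htop : ∀ x : G, ω x = ⊤ ↔ x = 1)
    (hgt : ∀ x : G, ((((p : ℝ) - 1)⁻¹ : ℝ) : WithTop ℝ) < ω x)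
    (hpow : ∀ x : G, ω (x ^ p) = ω x + 1)
    -- `G` is complete:
    (hcomplete : ∀ c : ℕ → G,
      (∀ C : ℝ, ∃ t : ℕ, ∀ i ≥ t, ∀ j ≥ t, (C : WithTop ℝ) ≤ ω (c i * (c j)⁻¹)) →
      ∃ L : G, ∀ C : ℝ, ∃ t : ℕ, ∀ i ≥ t, (C : WithTop ℝ) ≤ ω (c i * L⁻¹))
    -- `G` is `p`-saturated:
    (hsat : ∀ x : G, (((((p : ℝ) - 1)⁻¹ + 1 : ℝ)) : WithTop ℝ) < ω x → ∃ y : G, y ^ p = x)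
    -- `φ` is an automorphism with `deg_ω(φ) > 1/(p-1)` ...
    (φ : MulAut G)
    (hdeg : ∃ d : ℝ, (((p : ℝ) - 1)⁻¹ : ℝ) < d ∧
      ∀ g : G, ω g + (d : WithTop ℝ) ≤ ω (φ g * g⁻¹))
    -- ... acting trivially modulo the centre
    (hZ : ∀ g : G, φ g * g⁻¹ ∈ Subgroup.center G) :
    ∃ Z : G →* G,
      -- `z(φ)` takes values in the centre
      (∀ g : G, Z g ∈ Subgroup.center G) ∧
      -- the `p^r`-th roots of `φ^{p^r}(g) g⁻¹` exist ...
      (∀ g : G, ∃ c : ℕ → G, ∀ r : ℕ, (c r) ^ (p ^ r) = (φ ^ (p ^ r)) g * g⁻¹) ∧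
      -- ... and any such sequence of roots converges to `z(φ)(g)`
      (∀ (g : G) (c : ℕ → G),
        (∀ r : ℕ, (c r) ^ (p ^ r) = (φ ^ (p ^ r)) g * g⁻¹) →
        ∀ C : ℝ, ∃ t : ℕ, ∀ r ≥ t, (C : WithTop ℝ) ≤ ω (c r * (Z g)⁻¹)) := by
    classical
  obtain ⟨d, hd, hdeg⟩ := hdeg
  have hpinv_pos : (0 : ℝ) < ((p : ℝ) - 1)⁻¹ := by
    have h2 : (2 : ℝ) ≤ (p : ℝ) := by exact_mod_cast hp.two_le
    have : (1 : ℝ) ≤ (p : ℝ) - 1 := by linarith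
    positivity
  have hd0 : (0 : ℝ) < d := lt_trans hpinv_pos hd
  -- generic WithTop arithmetic helpers
  have hstrict : ∀ (z : WithTop ℝ) (c e : ℝ), (c : WithTop ℝ) < z →
      ((c + e : ℝ) : WithTop ℝ) < z + ((e : ℝ) : WithTop ℝ) := by
    intro z c e hz
    rcases eq_or_ne z ⊤ with rfl | hne
    · rw [top_add]
      exact WithTop.coe_lt_top _
    · obtain ⟨w, hw0⟩ := Option.ne_none_iff_exists.mp hne
      have hw : ((w : ℝ) : WithTop ℝ) = z := hw0
      rw [← hw] at hz ⊢
      rw [WithTop.coe_lt_coe] at hz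
      rw [← WithTop.coe_add, WithTop.coe_lt_coe]
      linarith
  have hcancel : ∀ (z : WithTop ℝ) (c e : ℝ),
      ((c + e : ℝ) : WithTop ℝ) ≤ z + ((e : ℝ) : WithTop ℝ) → ((c : ℝ) : WithTop ℝ) ≤ z := by
    intro z c e h
    rcases eq_or_ne z ⊤ with rfl | hne
    · exact le_top
    · obtain ⟨w, hw0⟩ := Option.ne_none_iff_exists.mp hne
      have hw : ((w : ℝ) : WithTop ℝ) = z := hw0
      rw [← hw] at h ⊢
      rw [← WithTop.coe_add, WithTop.coe_le_coe] at h
      rw [WithTop.coe_le_coe]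
      linarith
  -- centrality of the `A r g` and lower bound on their values
  have hAcent : ∀ (r : ℕ) (g : G), (φ ^ p ^ r) g * g⁻¹ ∈ Subgroup.center G :=
    fun r g => Acent φ hZ (p ^ r) g
  have hAval : ∀ (r : ℕ) (g : G),
      ((((p : ℝ) - 1)⁻¹ + r : ℝ) : WithTop ℝ) < ω ((φ ^ p ^ r) g * g⁻¹) := by
    intro r g
    exact lt_of_lt_of_le (hstrict _ _ _ (hgt (φ g * g⁻¹)))
      (omega_A_ge hquot htop hpow hp φ hZ hd hdeg r g)
  -- the canonical central root sequence
  have hroot : ∀ (g : G) (r : ℕ), ∃ y : G, y ^ p ^ r = (φ ^ p ^ r) g * g⁻¹ :=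
    fun g r => root_exists hquot hcomm htop hgt hpow hp hsat r _ (hAcent r g) (hAval r g)
  choose b hb using hroot
  have hbc : ∀ (g : G) (r : ℕ), b g r ∈ Subgroup.center G := by
    intro g r
    refine pow_central hquot hcomm htop hgt hpow hp r _ ?_
    rw [hb g r]
    exact hAcent r g
  -- Cauchy property of the root sequence
  have hstep : ∀ (g : G) (r : ℕ),
      ((r + d - 1 : ℝ) : WithTop ℝ) ≤ ω (b g (r + 1) * (b g r)⁻¹) := by
    intro g r
    have hcomm2 : Commute (b g (r + 1)) ((b g r)⁻¹) :=
      (commute_of_center (hbc g r) _).inv_right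
    have hppow : (b g (r + 1) * (b g r)⁻¹) ^ p ^ (r + 1)
        = ((φ ^ p ^ (r + 1)) g * g⁻¹) * (((φ ^ p ^ r) g * g⁻¹) ^ p)⁻¹ := by
      rw [hcomm2.mul_pow, inv_pow, hb g (r + 1)]
      congr 2
      rw [← hb g r, ← pow_mul, ← pow_succ]
    have h1 := cauchy_num hquot htop hpow hp φ hZ hd hdeg r g
    rw [← hppow, omega_pow_p_pow hpow] at h1
    have h2 : ((r + (d + r) : ℝ) : WithTop ℝ)
        ≤ ω (b g (r + 1) * (b g r)⁻¹) + (((r + 1 : ℕ) : ℝ) : WithTop ℝ) := by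
      refine le_trans ?_ h1
      rw [show ((r + (d + r) : ℝ) : WithTop ℝ)
          = ((r : ℝ) : WithTop ℝ) + ((d + r : ℝ) : WithTop ℝ) from by rw [← WithTop.coe_add]]
      refine add_le_add_left ?_ _
      refine le_trans ?_ (le_of_lt (hAval r g))
      rw [WithTop.coe_le_coe]
      linarith
    refine hcancel _ _ ((r + 1 : ℕ) : ℝ) (le_trans ?_ h2)
    rw [WithTop.coe_le_coe]
    push_cast
    linarith
  have hcauchy : ∀ (g : G) (i j : ℕ), i ≤ j →
      ((i + d - 1 : ℝ) : WithTop ℝ) ≤ ω (b g j * (b g i)⁻¹) := by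
    intro g i j hij
    induction j, hij using Nat.le_induction with
    | base =>
        rw [mul_inv_cancel, omega_one htop]
        exact le_top
    | succ j hij ih =>
        have hsplit : b g (j + 1) * (b g i)⁻¹
            = (b g (j + 1) * (b g j)⁻¹) * (b g j * (b g i)⁻¹) := by group
        rw [hsplit]
        refine omega_mul_le hquot htop (le_trans ?_ (hstep g j)) ih
        rw [WithTop.coe_le_coe]
        have : (i : ℝ) ≤ (j : ℝ) := by exact_mod_cast hij
        linarith
  have hCauchyFull : ∀ g : G, ∀ C : ℝ, ∃ t : ℕ, ∀ i ≥ t, ∀ j ≥ t,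
      (C : WithTop ℝ) ≤ ω (b g i * (b g j)⁻¹) := by
    intro g C
    obtain ⟨t, ht⟩ := exists_nat_gt (C - d + 1)
    refine ⟨t, fun i hi j hj => ?_⟩
    have hsym : ∀ a b' : G, ω (a * b'⁻¹) = ω (b' * a⁻¹) := by
      intro a b'
      rw [← omega_inv hquot htop (b' * a⁻¹)]
      congr 1
      group
    rcases le_total i j with hij | hij
    · rw [hsym]
      refine le_trans ?_ (hcauchy g i j hij)
      rw [WithTop.coe_le_coe]
      have h1 : (t : ℝ) ≤ (i : ℝ) := by exact_mod_cast hi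
      linarith
    · refine le_trans ?_ (hcauchy g j i hij)
      rw [WithTop.coe_le_coe]
      have h1 : (t : ℝ) ≤ (j : ℝ) := by exact_mod_cast hj
      linarith
  have hlim : ∀ g : G, ∃ L : G, ∀ C : ℝ, ∃ t : ℕ, ∀ i ≥ t,
      (C : WithTop ℝ) ≤ ω (b g i * L⁻¹) := fun g => hcomplete (b g) (hCauchyFull g)
  choose L hL using hlim
  -- uniqueness of limits
  have huniq : ∀ (s : ℕ → G) (M M' : G),
      (∀ C : ℝ, ∃ t : ℕ, ∀ i ≥ t, (C : WithTop ℝ) ≤ ω (s i * M⁻¹)) →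
      (∀ C : ℝ, ∃ t : ℕ, ∀ i ≥ t, (C : WithTop ℝ) ≤ ω (s i * M'⁻¹)) → M = M' := by
    intro s M M' h1 h2
    have hall : ∀ C : ℝ, (C : WithTop ℝ) ≤ ω (M * M'⁻¹) := by
      intro C
      obtain ⟨t1, ht1⟩ := h1 C
      obtain ⟨t2, ht2⟩ := h2 C
      have e : M * M'⁻¹ = (s (max t1 t2) * M⁻¹)⁻¹ * (s (max t1 t2) * M'⁻¹) := by group
      rw [e]
      refine omega_mul_le hquot htop ?_ (ht2 _ (le_max_right _ _))
      rw [omega_inv hquot htop]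
      exact ht1 _ (le_max_left _ _)
    have htopeq : ω (M * M'⁻¹) = ⊤ := by
      by_contra hne
      obtain ⟨w, hw0⟩ := Option.ne_none_iff_exists.mp hne
      have hw : ((w : ℝ) : WithTop ℝ) = ω (M * M'⁻¹) := hw0
      have := hall (w + 1)
      rw [← hw, WithTop.coe_le_coe] at this
      linarith
    exact mul_inv_eq_one.mp ((htop _).mp htopeq)
  -- the limits are central
  have hLc : ∀ g : G, L g ∈ Subgroup.center G := by
    intro g
    rw [Subgroup.mem_center_iff]
    intro h
    have hconv : ∀ C : ℝ, ∃ t : ℕ, ∀ i ≥ t,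
        (C : WithTop ℝ) ≤ ω (b g i * (h * L g * h⁻¹)⁻¹) := by
      intro C
      obtain ⟨t, ht⟩ := hL g C
      refine ⟨t, fun i hi => ?_⟩
      have hc := commute_of_center (hbc g i) h
      have e : b g i * (h * L g * h⁻¹)⁻¹ = h * (b g i * (L g)⁻¹) * h⁻¹ := by
        calc b g i * (h * L g * h⁻¹)⁻¹ = (b g i * h) * ((L g)⁻¹ * h⁻¹) := by group
          _ = (h * b g i) * ((L g)⁻¹ * h⁻¹) := by rw [← hc.eq]
          _ = h * (b g i * (L g)⁻¹) * h⁻¹ := by group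
      rw [e]
      exact le_trans (ht i hi) (omega_conj hquot htop hcomm hp hgt h _)
    have heq := huniq (b g) (L g) (h * L g * h⁻¹) (hL g) hconv
    have h3 := congrArg (fun z => z * h) heq
    simpa [mul_assoc] using h3.symm
  -- multiplicativity of the root sequences
  have hbmul : ∀ (g h : G) (r : ℕ), b (g * h) r = b g r * b h r := by
    intro g h r
    have hc := commute_of_center (hAcent r h) g⁻¹
    have hAmul : (φ ^ p ^ r) (g * h) * (g * h)⁻¹
        = ((φ ^ p ^ r) g * g⁻¹) * ((φ ^ p ^ r) h * h⁻¹) := by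
      calc (φ ^ p ^ r) (g * h) * (g * h)⁻¹
          = (φ ^ p ^ r) g * (((φ ^ p ^ r) h * h⁻¹) * g⁻¹) := by rw [map_mul]; group
        _ = (φ ^ p ^ r) g * (g⁻¹ * ((φ ^ p ^ r) h * h⁻¹)) := by rw [← hc.eq]
        _ = ((φ ^ p ^ r) g * g⁻¹) * ((φ ^ p ^ r) h * h⁻¹) := by group
    have hcbb : Commute (b g r) (b h r) := commute_of_center (hbc h r) (b g r)
    refine root_unique hquot hcomm htop hgt hpow hp (r := r) ?_ ?_
    · rw [hb (g * h) r, hcbb.mul_pow, hb g r, hb h r]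
      exact hAmul
    · rw [hcbb.mul_pow, hb g r, hb h r]
      exact Subgroup.mul_mem _ (hAcent r g) (hAcent r h)
  -- multiplicativity of the limit
  have hLmul : ∀ g h : G, L (g * h) = L g * L h := by
    intro g h
    refine huniq (b (g * h)) _ _ (hL (g * h)) ?_
    intro C
    obtain ⟨t1, ht1⟩ := hL g C
    obtain ⟨t2, ht2⟩ := hL h C
    refine ⟨max t1 t2, fun i hi => ?_⟩
    have c1 : Commute ((b h i) * (L h)⁻¹) ((L g)⁻¹) :=
      commute_of_center (Subgroup.inv_mem _ (hLc g)) _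
    have e : b (g * h) i * (L g * L h)⁻¹
        = (b g i * (L g)⁻¹) * (b h i * (L h)⁻¹) := by
      rw [hbmul g h i]
      calc b g i * b h i * (L g * L h)⁻¹
          = b g i * ((b h i * (L h)⁻¹) * (L g)⁻¹) := by group
        _ = b g i * ((L g)⁻¹ * (b h i * (L h)⁻¹)) := by rw [c1.eq]
        _ = (b g i * (L g)⁻¹) * (b h i * (L h)⁻¹) := by group
    rw [e]
    exact omega_mul_le hquot htop (ht1 i (le_trans (le_max_left _ _) hi))
      (ht2 i (le_trans (le_max_right _ _) hi))
  refine ⟨MonoidHom.mk' L hLmul, fun g => hLc g, fun g => ⟨b g, hb g⟩, ?_⟩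
  intro g c hc C
  have hceq : ∀ r : ℕ, c r = b g r := by
    intro r
    refine root_unique hquot hcomm htop hgt hpow hp (r := r) ?_ ?_
    · rw [hc r, hb g r]
    · rw [hb g r]
      exact hAcent r g
  obtain ⟨t, ht⟩ := hL g C
  refine ⟨t, fun r hr => ?_⟩
  rw [hceq r]
  exact ht r hr
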